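/- arXiv:1202.5782 — 3 statements merged into one kernel-verified Lean document; each statement's English description precedes it below -/
import Mathlib

section
/- Let M be an R-module. Then the second classical Zariski topology on Spec^s(M) is the cofinite topology if and only if S.dim(M) ≤ 0 (there are no two second submodules S1 ⊊ S2) and for every submodule N of M, either V^{s*}(N) = Spec^s(M) or V^{s*}(N) is finite. -/
open Pointwise

variable (R M : Type*) [CommRing R] [AddCommGroup M] [Module R M]

/-- A nonzero submodule `S` is *second* if for every `r : R`, `r • S = S` or `r • S = ⊥`. -/
def IsSecondSubmodule (S : Submodule R M) : Prop :=
  S ≠ ⊥ ∧ ∀ r : R, r • S = S ∨ r • S = ⊥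

/-- The second spectrum of `M`: the collection of all second submodules of `M`. -/
def SecondSpec : Type _ := {S : Submodule R M // IsSecondSubmodule R M S}

/-- `V^{s*}(N)`: the set of second submodules contained in `N`. -/
def Vs (N : Submodule R M) : Set (SecondSpec R M) := {S | S.1 ≤ N}

/-- `W^s(N)`: the complement of `V^{s*}(N)` in `Spec^s(M)`. -/
def Ws (N : Submodule R M) : Set (SecondSpec R M) := (Vs R M N)ᶜ

/-- The second classical Zariski topology on `Spec^s(M)`, generated by the
sub-basis `{W^s(N) : N ≤ M}`. -/
instance secondZariski : TopologicalSpace (SecondSpec R M) :=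
  TopologicalSpace.generateFrom {U | ∃ N : Submodule R M, U = Ws R M N}

/-- The second socle of a submodule `N`: the sum of all second submodules of `M`
contained in `N`. -/
def secSocle (N : Submodule R M) : Submodule R M :=
  sSup {S : Submodule R M | IsSecondSubmodule R M S ∧ S ≤ N}


lemma isOpen_Ws (N : Submodule R M) : IsOpen (Ws R M N) :=
  TopologicalSpace.GenerateOpen.basic _ ⟨N, rfl⟩

lemma open_up (U : Set (SecondSpec R M))
    (hU : TopologicalSpace.GenerateOpen {U | ∃ N : Submodule R M, U = Ws R M N} U) :
    ∀ S T : SecondSpec R M, S.1 ≤ T.1 → S ∈ U → T ∈ U := by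
  induction hU with
  | basic V hV =>
    obtain ⟨N, rfl⟩ := hV
    exact fun S T h hS hT => hS (h.trans hT)
  | univ => intro S T _ _; trivial
  | inter V W _ _ ihV ihW => exact fun S T h hS => ⟨ihV S T h hS.1, ihW S T h hS.2⟩
  | sUnion 𝒮 _ ih =>
    rintro S T h ⟨V, hV, hS⟩
    exact ⟨V, hV, ih V hV S T h hS⟩

/-- Thm 2.13: the second classical Zariski topology on `Spec^s(M)` is the cofinite
topology iff `S.dim M ≤ 0` and for every submodule `N`, `V^{s*}(N)` is the whole space
or finite. -/
theorem stmt6 :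
    (∀ U : Set (SecondSpec R M), IsOpen U ↔ (U = ∅ ∨ Uᶜ.Finite)) ↔
      ((¬ ∃ S₁ S₂ : Submodule R M,
          IsSecondSubmodule R M S₁ ∧ IsSecondSubmodule R M S₂ ∧ S₁ < S₂) ∧
        ∀ N : Submodule R M, Vs R M N = Set.univ ∨ (Vs R M N).Finite) := by
  constructor
  · intro h
    constructor
    · rintro ⟨S₁, S₂, h₁, h₂, hlt⟩
      set P₁ : SecondSpec R M := ⟨S₁, h₁⟩
      set P₂ : SecondSpec R M := ⟨S₂, h₂⟩
      have hne : P₁ ≠ P₂ := fun he => hlt.ne (congrArg Subtype.val he)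
      have hopen : IsOpen ({P₂}ᶜ : Set (SecondSpec R M)) := by
        rw [h]
        right
        rw [compl_compl]
        exact Set.finite_singleton _
      have := open_up R M _ hopen P₁ P₂ hlt.le hne
      exact this rfl
    · intro N
      rcases (h (Ws R M N)).mp (isOpen_Ws R M N) with he | hf
      · left
        have : Vs R M N = (Ws R M N)ᶜ := (compl_compl _).symm
        rw [this, he, Set.compl_empty]
      · right
        rwa [Ws, compl_compl] at hf
  · rintro ⟨hdim, hfin⟩
    have hsing : ∀ S : SecondSpec R M, Vs R M S.1 = {S} := by
      intro S
      ext T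
      simp only [Vs, Set.mem_setOf_eq, Set.mem_singleton_iff]
      constructor
      · intro hle
        rcases lt_or_eq_of_le hle with hlt | heq
        · exact absurd ⟨T.1, S.1, T.2, S.2, hlt⟩ hdim
        · exact Subtype.ext heq
      · rintro rfl; exact le_refl _
    intro U
    constructor
    · intro hU
      have hU' : TopologicalSpace.GenerateOpen {U | ∃ N : Submodule R M, U = Ws R M N} U := hU
      induction hU' with
      | basic V hV =>
        obtain ⟨N, rfl⟩ := hV
        rcases hfin N with hu | hf
        · left
          rw [Ws, hu, Set.compl_univ]
        · right
          rwa [Ws, compl_compl]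
      | univ => right; rw [Set.compl_univ]; exact Set.finite_empty
      | inter V W hV hW ihV ihW =>
        rcases ihV hV with rfl | hVf
        · left; exact Set.empty_inter _
        rcases ihW hW with rfl | hWf
        · left; exact Set.inter_empty _
        · right; rw [Set.compl_inter]; exact hVf.union hWf
      | sUnion 𝒮 h𝒮 ih =>
        by_cases hall : ∀ V ∈ 𝒮, V = ∅
        · left; exact Set.sUnion_eq_empty.mpr hall
        · push_neg at hall
          obtain ⟨V, hV𝒮, hVne⟩ := hall
          right
          rcases ih V hV𝒮 (h𝒮 V hV𝒮) with rfl | hVf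
          · exact (Set.not_nonempty_empty hVne).elim
          · exact hVf.subset (Set.compl_subset_compl.mpr (Set.subset_sUnion_of_mem hV𝒮))
    · rintro (rfl | hf)
      · exact isOpen_empty
      · have hclosed : IsClosed Uᶜ := by
          have : Uᶜ = ⋃ s ∈ Uᶜ, ({s} : Set (SecondSpec R M)) := by
            exact (Set.biUnion_of_singleton _).symm
          rw [this]
          refine Set.Finite.isClosed_biUnion hf fun s _ => ?_
          have : ({s} : Set (SecondSpec R M)) = Vs R M s.1 := (hsing s).symm
          rw [this]
          have : IsOpen (Ws R M s.1) := isOpen_Ws R M s.1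
          rw [Ws] at this
          exact isOpen_compl_iff.mp this
        rw [← compl_compl U]
        exact hclosed.isOpen_compl
end

section
/- Let M be an R-module, endow Spec^s(M) with the second classical Zariski topology, let Y ⊆ Spec^s(M), and let T(Y) = Σ_{S ∈ Y} S be the submodule of M generated by the members of Y. (a) If Y is an irreducible subset of Spec^s(M), then T(Y) is a second submodule of M. (b) If T(Y) is a second submodule of M and T(Y) belongs to the closure of Y, then Y is irreducible. -/
open Pointwise

variable (R M : Type*) [CommRing R] [AddCommGroup M] [Module R M]

lemma vs_closed (N : Submodule R M) : IsClosed (Vs R M N) := by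
  rw [← isOpen_compl_iff]
  exact TopologicalSpace.GenerateOpen.basic _ ⟨N, rfl⟩

lemma open_up_s14 {U : Set (SecondSpec R M)} (hU : IsOpen U) {A B : SecondSpec R M}
    (hAB : A.1 ≤ B.1) (hA : A ∈ U) : B ∈ U := by
  have h : TopologicalSpace.GenerateOpen {U | ∃ N : Submodule R M, U = Ws R M N} U := hU
  clear hU
  revert hA
  induction h with
  | basic V hV => obtain ⟨N, rfl⟩ := hV; exact fun hA hle => hA (hAB.trans hle)
  | univ => exact fun _ => trivial
  | inter V W _ _ ihV ihW => exact fun hA => ⟨ihV hA.1, ihW hA.2⟩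
  | sUnion S _ ih => exact fun ⟨V, hV, hAV⟩ => ⟨V, hV, ih V hV hAV⟩

lemma mem_closure_single {A B : SecondSpec R M} (hAB : A.1 ≤ B.1) :
    A ∈ closure ({B} : Set (SecondSpec R M)) := by
  rw [mem_closure_iff]
  exact fun U hU hA => ⟨B, open_up_s14 R M hU hAB hA, rfl⟩

/-- Thm 2.25: for `Y ⊆ Spec^s(M)` and `T(Y) = Σ_{S ∈ Y} S`:
(a) if `Y` is irreducible then `T(Y)` is a second submodule;
(b) if `T(Y)` is second and `T(Y) ∈ cl(Y)`, then `Y` is irreducible. -/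
theorem stmt14 (Y : Set (SecondSpec R M)) :
    (IsIrreducible Y → IsSecondSubmodule R M (sSup (Subtype.val '' Y))) ∧
      (∀ h : IsSecondSubmodule R M (sSup (Subtype.val '' Y)),
        (⟨sSup (Subtype.val '' Y), h⟩ : SecondSpec R M) ∈ closure Y →
          IsIrreducible Y) := by
  constructor
  · rintro ⟨⟨A0, hA0⟩, hpre⟩
    set T := sSup (Subtype.val '' Y) with hT
    have hmemT : ∀ A ∈ Y, A.1 ≤ T := fun A hA => le_sSup ⟨A, hA, rfl⟩
    constructor
    · intro hbot
      exact A0.2.1 (le_bot_iff.mp (hbot ▸ hmemT A0 hA0))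
    · intro r
      set K := LinearMap.ker (LinearMap.lsmul R M r) with hK
      set N := sSup {S : Submodule R M | (∃ A ∈ Y, A.1 = S) ∧ r • S = S} with hN
      have hsub : Y ⊆ Vs R M N ∪ Vs R M K := by
        intro A hA
        rcases A.2.2 r with h | h
        · refine Or.inl (show A.1 ≤ N from ?_)
          rw [hN]
          exact le_sSup ⟨⟨A, hA, rfl⟩, h⟩
        · refine Or.inr (show A.1 ≤ K from fun s hs => ?_)
          have hmem : r • s ∈ r • A.1 := Submodule.smul_mem_pointwise_smul _ _ _ hs
          rw [h] at hmem
          exact (Submodule.mem_bot R).mp hmem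
      rcases isPreirreducible_iff_isClosed_union_isClosed.mp hpre _ _
          (vs_closed R M N) (vs_closed R M K) hsub with hc | hc
      · left
        have hTN : T ≤ N := sSup_le (by rintro _ ⟨A, hA, rfl⟩; exact hc hA)
        have hNT : N ≤ r • T := by
          rw [hN]
          refine sSup_le ?_
          rintro S ⟨⟨A, hA, rfl⟩, hr⟩
          calc A.1 = r • A.1 := hr.symm
            _ ≤ r • T := by
                intro m hm
                obtain ⟨s, hs, rfl⟩ := Submodule.mem_map.mp hm
                exact Submodule.smul_mem_pointwise_smul _ _ _ (hmemT A hA hs)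
        have hrTT : r • T ≤ T := by
          intro m hm
          obtain ⟨s, hs, rfl⟩ := Submodule.mem_map.mp hm
          exact T.smul_mem r hs
        exact le_antisymm hrTT (hTN.trans hNT)
      · right
        have hTK : T ≤ K := sSup_le (by rintro _ ⟨A, hA, rfl⟩; exact hc hA)
        rw [eq_bot_iff]
        intro m hm
        obtain ⟨s, hs, rfl⟩ := Submodule.mem_map.mp hm
        exact (Submodule.mem_bot R).mpr (hTK hs)
  · intro h hmem
    constructor
    · exact closure_nonempty_iff.mp ⟨_, hmem⟩
    · rw [isPreirreducible_iff_isClosed_union_isClosed]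
      intro C1 C2 hC1 hC2 hsub
      have hTin : (⟨sSup (Subtype.val '' Y), h⟩ : SecondSpec R M) ∈ C1 ∪ C2 :=
        closure_minimal hsub (hC1.union hC2) hmem
      rcases hTin with h1 | h1
      · left
        intro A hA
        exact closure_minimal (Set.singleton_subset_iff.mpr h1) hC1
          (mem_closure_single R M (le_sSup ⟨A, hA, rfl⟩))
      · right
        intro A hA
        exact closure_minimal (Set.singleton_subset_iff.mpr h1) hC2
          (mem_closure_single R M (le_sSup ⟨A, hA, rfl⟩))
end

section
/- Let M be an R-module having the descending chain condition on socle submodules (every descending chain of socle submodules of M stabilizes). Then for every n ∈ ℕ and all submodules N1, ..., Nn of M, the set W^s(N1) ∩ W^s(N2) ∩ ... ∩ W^s(Nn) is a quasi-compact subset of Spec^s(M) with the second classical Zariski topology. In particular, Spec^s(M) itself is quasi-compact. -/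
open Pointwise

variable (R M : Type*) [CommRing R] [AddCommGroup M] [Module R M]

lemma secSocle_le (N : Submodule R M) : secSocle R M N ≤ N :=
  sSup_le fun _ hS => hS.2

lemma le_secSocle {S N : Submodule R M} (h : IsSecondSubmodule R M S) (hle : S ≤ N) :
    S ≤ secSocle R M N := le_sSup ⟨h, hle⟩

lemma secSocle_idem (N : Submodule R M) :
    secSocle R M (secSocle R M N) = secSocle R M N :=
  le_antisymm (secSocle_le R M _)
    (sSup_le_sSup fun S hS => ⟨hS.1, le_secSocle R M hS.1 hS.2⟩)

lemma Vs_secSocle (N : Submodule R M) : Vs R M (secSocle R M N) = Vs R M N :=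
  Set.ext fun S => ⟨fun h => le_trans h (secSocle_le R M N), fun h => le_secSocle R M S.2 h⟩

lemma Vs_inf (N L : Submodule R M) : Vs R M (N ⊓ L) = Vs R M N ∩ Vs R M L :=
  Set.ext fun S => ⟨fun h => ⟨show S.1 ≤ N from le_trans h inf_le_left, show S.1 ≤ L from le_trans h inf_le_right⟩,
    fun h => show S.1 ≤ N ⊓ L from le_inf h.1 h.2⟩

lemma exists_min
    (hdcc : ∀ f : ℕ → Submodule R M, (∀ n, secSocle R M (f n) = f n) →
      (∀ n, f (n + 1) ≤ f n) → ∃ n, ∀ m, n ≤ m → f m = f n)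
    (T : Set (Submodule R M)) (hT : ∀ X ∈ T, secSocle R M X = X) (hne : T.Nonempty) :
    ∃ X ∈ T, ∀ Y ∈ T, Y ≤ X → Y = X := by
  by_contra h
  push_neg at h
  obtain ⟨x0, hx0⟩ := hne
  choose! g hg1 hg2 hg3 using h
  let F : ℕ → Submodule R M := fun n => g^[n] x0
  have hmem : ∀ n, F n ∈ T := by
    intro n
    induction n with
    | zero => exact hx0
    | succ n ih =>
        show g^[n+1] x0 ∈ T
        rw [Function.iterate_succ_apply']
        exact hg1 _ ih
  have hdesc : ∀ n, F (n + 1) ≤ F n := by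
    intro n
    show g^[n+1] x0 ≤ F n
    rw [Function.iterate_succ_apply']
    exact hg2 _ (hmem n)
  obtain ⟨n, hn⟩ := hdcc F (fun n => hT _ (hmem n)) hdesc
  have h1 : F (n + 1) = F n := hn (n + 1) (Nat.le_succ n)
  have h2 : F (n + 1) = g (F n) := Function.iterate_succ_apply' g n x0
  exact hg3 _ (hmem n) (h2 ▸ h1)

/-- Thm 3.10: if `M` has dcc on socle submodules, then every finite intersection
`W^s(N₁) ∩ ... ∩ W^s(Nₙ)` (in particular `Spec^s(M)` itself, the case `n = 0`) is a
quasi-compact subset of `Spec^s(M)` with the second classical Zariski topology. -/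
theorem stmt17
    (hdcc : ∀ f : ℕ → Submodule R M, (∀ n, secSocle R M (f n) = f n) →
      (∀ n, f (n + 1) ≤ f n) → ∃ n, ∀ m, n ≤ m → f m = f n) :
    ∀ (n : ℕ) (N : Fin n → Submodule R M),
      IsCompact (⋂ i, Ws R M (N i)) := by
  intro n N
  rw [isCompact_iff_ultrafilter_le_nhds]
  intro f hf
  have hK : (⋂ i, Ws R M (N i)) ∈ f := Filter.le_principal_iff.mp hf
  set T : Set (Submodule R M) := {X | secSocle R M X = X ∧ Vs R M X ∈ f} with hTdef
  have hTne : T.Nonempty := by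
    refine ⟨secSocle R M ⊤, secSocle_idem R M _, ?_⟩
    rw [Vs_secSocle]
    have : Vs R M (⊤ : Submodule R M) = Set.univ := Set.eq_univ_of_forall fun S => show S.1 ≤ ⊤ from le_top
    rw [this]
    exact Filter.univ_mem
  obtain ⟨L0, hL0T, hmin⟩ := exists_min R M hdcc T (fun X hX => hX.1) hTne
  obtain ⟨hL0soc, hL0f⟩ := hL0T
  have key : ∀ L : Submodule R M, Vs R M L ∈ f → L0 ≤ L := by
    intro L hL
    have hX : secSocle R M (L0 ⊓ L) ∈ T := by
      refine ⟨secSocle_idem R M _, ?_⟩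
      rw [Vs_secSocle, Vs_inf]
      exact Filter.inter_mem hL0f hL
    have hle : secSocle R M (L0 ⊓ L) ≤ L0 := le_trans (secSocle_le R M _) inf_le_left
    have heq := hmin _ hX hle
    calc L0 = secSocle R M (L0 ⊓ L) := heq.symm
      _ ≤ L := le_trans (secSocle_le R M _) inf_le_right
  have hmem : (⋂ i, Ws R M (N i)) ∩ Vs R M L0 ∈ f := Filter.inter_mem hK hL0f
  obtain ⟨S, hSK, hSL0⟩ := Filter.nonempty_of_mem hmem
  refine ⟨S, hSK, ?_⟩
  have hnhds : (nhds S : Filter (SecondSpec R M)) =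
      ⨅ s ∈ {s | S ∈ s ∧ s ∈ {U | ∃ N : Submodule R M, U = Ws R M N}}, Filter.principal s :=
    TopologicalSpace.nhds_generateFrom
  rw [hnhds]
  refine le_iInf₂ fun s hs => ?_
  rw [Filter.le_principal_iff]
  obtain ⟨hSs, L, rfl⟩ := hs
  by_contra hcon
  have hVs : Vs R M L ∈ f := by
    have : (Ws R M L)ᶜ ∈ f := Ultrafilter.compl_mem_iff_notMem.2 hcon
    rwa [Ws, compl_compl] at this
  exact hSs (le_trans hSL0 (key L hVs))
end
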